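/- (Theorem 4.3, simple exclusion, closed-closed network, detailed balance) Fix M with 1 ≤ M ≤ #Λ and N ∈ ℕ. Suppose the symmetry conditions (4.15)–(4.16) hold: β_{kl}(n_k,n_l;y) = β_{lk}(n_l+1,n_k−1;y) for k ≠ l, y_k = y_l = 0, n_k ≥ 1; θ_{jk}(n_j,n_k;y) = θ_{kj}(n_k+1,n_j−1;y) for y_j = 1, y_k = 0, n_j ≥ 1; ε_{ij}(n_i,n_j;y)·γ_i(n_i−1) = γ_j(n_j)·ε_{ji}(n_j+1,n_i−1;y) for i ≠ j, y_i = y_j = 1, n_i ≥ 1; and τ_{jj'}(n;y) = τ_{j'j}(n;y+e^{j→j'}) for y_j = 1, y_{j'} = 0. Then on {(y,n) : |y| = M, |n| = N} the weight w(y,n) = ∏_{j : y_j = 1} γ̄_j(n_j) satisfies the detailed balance equations: (i) w(y,n)·β_{kl}(n_k,n_l;y) = w(y, n+e^{k→l})·β_{lk}(n_l+1,n_k−1;y) for y_k = y_l = 0, k ≠ l, n_k ≥ 1; (ii) w(y,n)·ε_{ij}(n_i,n_j;y) = w(y, n+e^{i→j})·ε_{ji}(n_j+1,n_i−1;y) for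 y_i = y_j = 1, i ≠ j, n_i ≥ 1; (iii) w(y,n)·θ_{jk}(n_j,n_k;y) = w(y, n+e^{j→k})·θ_{kj}(n_k+1,n_j−1;y)·γ_j(n_j−1) for y_j = 1, y_k = 0, n_j ≥ 1; (iv) w(y,n)·θ_{kj}(n_k,n_j;y)·γ_j(n_j) = w(y, n+e^{k→j})·θ_{jk}(n_j+1,n_k−1;y) for y_j = 1, y_k = 0, n_k ≥ 1; (v) w(y,n)·γ̄_j(n_j)^{−1}·τ_{jj'}(n;y) = w(y+e^{j→j'}, n)·γ̄_{j'}(n_{j'})^{−1}·τ_{j'j}(n;y+e^{j→j'}) for y_j = 1, y_{j'} = 0. -/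

import Mathlib

/-- The `e^k` configuration increment: `n + e^k`. -/
def bump {Λ : Type*} [DecidableEq Λ] (n : Λ → ℕ) (k : Λ) : Λ → ℕ :=
  fun l => n l + (if l = k then 1 else 0)

/-- The jump move `n + e^{i→k} = n - e^i + e^k`. -/
def move {Λ : Type*} [DecidableEq Λ] (n : Λ → ℕ) (i k : Λ) : Λ → ℕ :=
  fun l => n l - (if l = i then 1 else 0) + (if l = k then 1 else 0)

/-- Theorem 4.3, simple exclusion, closed-closed network, detailed
balance: under symmetry conditions (4.15)-(4.16), on `{(y,n) : |y|=M, |n|=N}`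
the weights `w(y,n) = ∏_{j:y_j=1} γ̄_j(n_j)` satisfy detailed balance.
Occupation configurations `y : Λ → {0,1}` are encoded as `y : Λ → ℕ` with
`∀ s, y s ≤ 1`. -/
theorem exclusion_closed_closed_detailed_balance
    (Λ : Type*) [Fintype Λ] [DecidableEq Λ] [Nonempty Λ]
    (M : ℕ) (hM1 : 1 ≤ M) (hM2 : M ≤ Fintype.card Λ) (N : ℕ)
    (gam : Λ → ℕ → ℝ)
    (hgam : ∀ p m, 0 < gam p m) (hgam0 : ∀ p, gam p 0 = 1)
    (gamBar : Λ → ℕ → ℝ)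
    (hgamBar : ∀ p m, gamBar p m = ∏ u ∈ Finset.range m, gam p u)
    (β θ ε : Λ → Λ → ℕ → ℕ → (Λ → ℕ) → ℝ) (τ : Λ → Λ → (Λ → ℕ) → (Λ → ℕ) → ℝ)
    (hβnn : ∀ k l a b y, 0 ≤ β k l a b y) (hθnn : ∀ j k a b y, 0 ≤ θ j k a b y)
    (hεnn : ∀ i j a b y, 0 ≤ ε i j a b y) (hτnn : ∀ j j' n y, 0 ≤ τ j j' n y)
    -- (4.15)
    (hβ : ∀ (y : Λ → ℕ), (∀ s, y s ≤ 1) → ∀ (k l : Λ) (a b : ℕ),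
      k ≠ l → y k = 0 → y l = 0 → 1 ≤ a →
      β k l a b y = β l k (b + 1) (a - 1) y)
    (hθ : ∀ (y : Λ → ℕ), (∀ s, y s ≤ 1) → ∀ (j k : Λ) (a b : ℕ),
      y j = 1 → y k = 0 → 1 ≤ a →
      θ j k a b y = θ k j (b + 1) (a - 1) y)
    (hε : ∀ (y : Λ → ℕ), (∀ s, y s ≤ 1) → ∀ (i j : Λ) (a b : ℕ),
      i ≠ j → y i = 1 → y j = 1 → 1 ≤ a →
      ε i j a b y * gam i (a - 1) = gam j b * ε j i (b + 1) (a - 1) y)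
    -- (4.16)
    (hτ : ∀ (y : Λ → ℕ), (∀ s, y s ≤ 1) → ∀ (j j' : Λ) (n : Λ → ℕ),
      y j = 1 → y j' = 0 → τ j j' n y = τ j' j n (move y j j'))
    (w : (Λ → ℕ) → (Λ → ℕ) → ℝ)
    (hw : ∀ (y n : Λ → ℕ), w y n =
      ∏ j ∈ Finset.univ.filter (fun j => y j = 1), gamBar j (n j)) :
    ∀ (y : Λ → ℕ), (∀ s, y s ≤ 1) → ∑ s, y s = M → ∀ n : Λ → ℕ, ∑ s, n s = N →
      -- (i) task jump between unloaded sites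
      (∀ k l, y k = 0 → y l = 0 → k ≠ l → 1 ≤ n k →
        w y n * β k l (n k) (n l) y =
          w y (move n k l) * β l k (n l + 1) (n k - 1) y) ∧
      -- (ii) task jump between loaded sites
      (∀ i j, y i = 1 → y j = 1 → i ≠ j → 1 ≤ n i →
        w y n * ε i j (n i) (n j) y =
          w y (move n i j) * ε j i (n j + 1) (n i - 1) y) ∧
      -- (iii) task jump from a loaded to an unloaded site
      (∀ j k, y j = 1 → y k = 0 → 1 ≤ n j →
        w y n * θ j k (n j) (n k) y =
          w y (move n j k) * (θ k j (n k + 1) (n j - 1) y * gam j (n j - 1))) ∧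
      -- (iv) task jump from an unloaded to a loaded site
      (∀ j k, y j = 1 → y k = 0 → 1 ≤ n k →
        w y n * (θ k j (n k) (n j) y * gam j (n j)) =
          w y (move n k j) * θ j k (n j + 1) (n k - 1) y) ∧
      -- (v) leap of a distinguished customer
      (∀ j j', y j = 1 → y j' = 0 →
        w y n * (gamBar j (n j))⁻¹ * τ j j' n y =
          w (move y j j') n * (gamBar j' (n j'))⁻¹ * τ j' j n (move y j j')) := by

  intro y hy hyM n hnN
  have hgbpos : ∀ p m, 0 < gamBar p m := by
    intro p m
    rw [hgamBar]
    exact Finset.prod_pos fun u _ => hgam p u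
  have hgbsucc : ∀ p m, gamBar p (m + 1) = gamBar p m * gam p m := by
    intro p m
    rw [hgamBar, hgamBar, Finset.prod_range_succ]
  set F := Finset.univ.filter (fun s => y s = 1) with hF
  refine ⟨?_, ?_, ?_, ?_, ?_⟩
  · -- (i)
    intro k l hk hl hkl hnk
    have hwe : w y (move n k l) = w y n := by
      rw [hw, hw]
      refine Finset.prod_congr rfl ?_
      intro s hs
      simp only [Finset.mem_filter] at hs
      have hsk : s ≠ k := by rintro rfl; rw [hk] at hs; exact zero_ne_one hs.2
      have hsl : s ≠ l := by rintro rfl; rw [hl] at hs; exact zero_ne_one hs.2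
      simp [move, hsk, hsl]
    rw [hwe, hβ y hy k l (n k) (n l) hkl hk hl hnk]
  · -- (ii)
    intro i j hi hj hij hni
    have hiF : i ∈ F := by simp [hF, hi]
    have hjF : j ∈ F.erase i := Finset.mem_erase.mpr ⟨hij.symm, by simp [hF, hj]⟩
    have key : ∀ m : Λ → ℕ, (∏ s ∈ F, gamBar s (m s)) =
        gamBar i (m i) * (gamBar j (m j) *
          ∏ s ∈ (F.erase i).erase j, gamBar s (m s)) := by
      intro m
      rw [← Finset.mul_prod_erase _ _ hiF, ← Finset.mul_prod_erase _ _ hjF]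
    have hvi : move n i j i = n i - 1 := by simp [move, hij]
    have hvj : move n i j j = n j + 1 := by
      simp [move, hij.symm, hij]
    have hrest : ∀ s ∈ (F.erase i).erase j, gamBar s (move n i j s) = gamBar s (n s) := by
      intro s hs
      simp only [Finset.mem_erase] at hs
      simp [move, hs.1, hs.2.1]
    rw [hw, hw, key, key, hvi, hvj, Finset.prod_congr rfl hrest]
    have h1 : gamBar i (n i) = gamBar i (n i - 1) * gam i (n i - 1) := by
      rw [← hgbsucc, Nat.sub_add_cancel hni]
    have h2 : gamBar j (n j + 1) = gamBar j (n j) * gam j (n j) := hgbsucc j (n j)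
    have he := hε y hy i j (n i) (n j) hij hi hj hni
    rw [h1, h2]
    linear_combination (gamBar i (n i - 1) * gamBar j (n j) *
      ∏ s ∈ (F.erase i).erase j, gamBar s (n s)) * he
  · -- (iii)
    intro j k hj hk hnj
    have hjF : j ∈ F := by simp [hF, hj]
    have hjk : j ≠ k := by rintro rfl; rw [hj] at hk; exact one_ne_zero hk
    have key : ∀ m : Λ → ℕ, (∏ s ∈ F, gamBar s (m s)) =
        gamBar j (m j) * ∏ s ∈ F.erase j, gamBar s (m s) := by
      intro m; rw [← Finset.mul_prod_erase _ _ hjF]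
    have hvj : move n j k j = n j - 1 := by simp [move, hjk]
    have hrest : ∀ s ∈ F.erase j, gamBar s (move n j k s) = gamBar s (n s) := by
      intro s hs
      simp only [Finset.mem_erase, Finset.mem_filter, hF] at hs
      have hsk : s ≠ k := by rintro rfl; rw [hk] at hs; exact zero_ne_one hs.2.2
      simp [move, hs.1, hsk]
    rw [hw, hw, key, key, hvj, Finset.prod_congr rfl hrest]
    have h1 : gamBar j (n j) = gamBar j (n j - 1) * gam j (n j - 1) := by
      rw [← hgbsucc, Nat.sub_add_cancel hnj]
    rw [hθ y hy j k (n j) (n k) hj hk hnj, h1]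
    ring
  · -- (iv)
    intro j k hj hk hnk
    have hjF : j ∈ F := by simp [hF, hj]
    have hjk : j ≠ k := by rintro rfl; rw [hj] at hk; exact one_ne_zero hk
    have key : ∀ m : Λ → ℕ, (∏ s ∈ F, gamBar s (m s)) =
        gamBar j (m j) * ∏ s ∈ F.erase j, gamBar s (m s) := by
      intro m; rw [← Finset.mul_prod_erase _ _ hjF]
    have hvj : move n k j j = n j + 1 := by simp [move, hjk]
    have hrest : ∀ s ∈ F.erase j, gamBar s (move n k j s) = gamBar s (n s) := by
      intro s hs
      simp only [Finset.mem_erase, Finset.mem_filter, hF] at hs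
      have hsk : s ≠ k := by rintro rfl; rw [hk] at hs; exact zero_ne_one hs.2.2
      simp [move, hs.1, hsk]
    have hθ' : θ k j (n k) (n j) y = θ j k (n j + 1) (n k - 1) y := by
      have := hθ y hy j k (n j + 1) (n k - 1) hj hk (by omega)
      rw [Nat.sub_add_cancel hnk] at this
      simpa using this.symm
    rw [hw, hw, key, key, hvj, Finset.prod_congr rfl hrest, hθ',
      hgbsucc j (n j)]
    ring
  · -- (v)
    intro j j' hj hj'
    have hjj' : j ≠ j' := by rintro rfl; rw [hj] at hj'; exact one_ne_zero hj'
    have hmy : ∀ s, move y j j' s = if s = j' then 1 else if s = j then 0 else y s := by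
      intro s
      by_cases h1 : s = j'
      · subst h1; simp [move, hjj'.symm, hj']
      · by_cases h2 : s = j
        · subst h2; simp [move, hjj', hj]
        · simp [move, h1, h2]
    have hFe : Finset.univ.filter (fun s => move y j j' s = 1) =
        insert j' (F.erase j) := by
      ext s
      simp only [Finset.mem_filter, Finset.mem_insert, Finset.mem_erase,
        Finset.mem_univ, true_and, hF, hmy s]
      by_cases h1 : s = j'
      · simp [h1]
      · by_cases h2 : s = j <;> simp [h1, h2]
    have hj'ne : j' ∉ F.erase j := by
      simp [hF, hj']
    have hjF : j ∈ F := by simp [hF, hj]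
    have hwn : w (move y j j') n = gamBar j' (n j') * ∏ s ∈ F.erase j, gamBar s (n s) := by
      rw [hw, hFe, Finset.prod_insert hj'ne]
    have hwo : w y n = gamBar j (n j) * ∏ s ∈ F.erase j, gamBar s (n s) := by
      rw [hw, ← Finset.mul_prod_erase _ _ hjF]
    rw [hwn, hwo, ← hτ y hy j j' n hj hj']
    have h1 : gamBar j (n j) ≠ 0 := (hgbpos j (n j)).ne'
    have h2 : gamBar j' (n j') ≠ 0 := (hgbpos j' (n j')).ne'
    field_simp
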